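/- Let p, q : [0, ∞) → ℂ be locally integrable, let φ(x, λ, α) be the unique solution of the Cauchy problem B y′ + Ω y = λ y, y(0) = (sin α, −cos α), and let φ₀(x, λ, α) = (sin(λx + α), −cos(λx + α)). Suppose K(x, t) is a measurable matrix kernel, defined for |t| ≤ x and integrable in t, such that for all x ≥ 0 and all λ ∈ ℂ the fundamental matrix satisfies Φ(x, λ) = exp(−B λ x) + ∫_{−x}^{x} K(x, t) exp(−B λ t) dt. Then, defining K₀(x, t, α) = K(x, t) − K(x, −t)·(σ₂ cos 2α + σ₃ sin 2α), for every λ, α ∈ ℂ and every x ≥ 0 one has φ(x, λ, α) = φ₀(x, λ, α) + ∫₀ˣ K₀(x, t, α) φ₀(t, λ, α) dt. -/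

import Mathlib

open MeasureTheory Filter Set

noncomputable section

/-- The matrix `B` with rows `(0, 1)` and `(-1, 0)`. -/
def BmatC : Matrix (Fin 2) (Fin 2) ℂ := !![0, 1; -1, 0]

/-- The Pauli-type matrix `σ₂` with rows `(1, 0)` and `(0, -1)`. -/
def sigma2C : Matrix (Fin 2) (Fin 2) ℂ := !![1, 0; 0, -1]

/-- The Pauli-type matrix `σ₃` with rows `(0, 1)` and `(1, 0)`. -/
def sigma3C : Matrix (Fin 2) (Fin 2) ℂ := !![0, 1; 1, 0]

/-- The potential matrix `Ω(x)` with rows `(p x, q x)` and `(q x, -p x)`. -/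
def OmegaC (p q : ℝ → ℂ) (x : ℝ) : Matrix (Fin 2) (Fin 2) ℂ := !![p x, q x; q x, -p x]

/-- The matrix `A(x, λ)` so that the Dirac system reads `y' = A(x, λ) y`. -/
def AmatC (p q : ℝ → ℂ) (lam : ℂ) (x : ℝ) : Matrix (Fin 2) (Fin 2) ℂ :=
  !![q x, -p x - lam; lam - p x, -q x]

/-- The matrix exponential `exp (-B λ t) = cos (λ t) • E - sin (λ t) • B`. -/
def EmatC (lam : ℂ) (t : ℝ) : Matrix (Fin 2) (Fin 2) ℂ :=
  Complex.cos (lam * t) • (1 : Matrix (Fin 2) (Fin 2) ℂ) - Complex.sin (lam * t) • BmatC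

/-- The free solution `φ₀(x, λ, α) = (sin (λx + α), -cos (λx + α))`. -/
def phi0C (lam α : ℂ) (x : ℝ) : Fin 2 → ℂ :=
  ![Complex.sin (lam * x + α), -Complex.cos (lam * x + α)]

/-- The kernel `K₀(x, t, α) = K(x, t) - K(x, -t)·(σ₂ cos 2α + σ₃ sin 2α)`. -/
def K0ker (K : ℝ → ℝ → Matrix (Fin 2) (Fin 2) ℂ) (α : ℂ) (x t : ℝ) :
    Matrix (Fin 2) (Fin 2) ℂ :=
  K x t - K x (-t) * (Complex.cos (2 * α) • sigma2C + Complex.sin (2 * α) • sigma3C)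

open Topology in
lemma gronwall_zero (f a : ℝ → ℝ) (x₀ : ℝ) (hx₀ : 0 ≤ x₀)
    (hf : ContinuousOn f (Icc 0 x₀)) (hf0 : ∀ x ∈ Icc 0 x₀, 0 ≤ f x)
    (ha0 : ∀ x ∈ Icc 0 x₀, 0 ≤ a x)
    (ha : IntegrableOn a (Icc 0 x₀))
    (haf : IntegrableOn (fun s => a s * f s) (Icc 0 x₀))
    (hle : ∀ x ∈ Icc 0 x₀, f x ≤ ∫ s in (0:ℝ)..x, a s * f s) :
    ∀ x ∈ Icc 0 x₀, f x = 0 := by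
  set S : Set ℝ := {x | x ∈ Icc 0 x₀ ∧ ∀ t ∈ Icc 0 x, f t = 0} with hS
  have h0mem : (0:ℝ) ∈ Icc 0 x₀ := ⟨le_rfl, hx₀⟩
  have h0S : (0:ℝ) ∈ S := by
    refine ⟨h0mem, ?_⟩
    intro t ht
    have ht0 : t = 0 := le_antisymm ht.2 ht.1
    subst ht0
    have h := hle 0 h0mem
    simp at h
    exact le_antisymm h (hf0 0 h0mem)
  have hbdd : BddAbove S := ⟨x₀, fun x hx => hx.1.2⟩
  set c := sSup S with hc
  have hcmem : c ∈ Icc 0 x₀ := ⟨le_csSup hbdd h0S, csSup_le ⟨0, h0S⟩ (fun x hx => hx.1.2)⟩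
  have hflt : ∀ t, 0 ≤ t → t < c → f t = 0 := by
    intro t ht htc
    obtain ⟨x, hxS, hx⟩ := exists_lt_of_lt_csSup ⟨0, h0S⟩ htc
    exact hxS.2 t ⟨ht, hx.le⟩
  have hz : (∫ s in (0:ℝ)..c, a s * f s) = 0 := by
    rw [intervalIntegral.integral_of_le hcmem.1,
      MeasureTheory.Measure.restrict_congr_set Ioo_ae_eq_Ioc.symm]
    apply MeasureTheory.integral_eq_zero_of_ae
    refine (MeasureTheory.ae_restrict_iff' measurableSet_Ioo).2 (Filter.Eventually.of_forall ?_)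
    intro s hs
    show a s * f s = 0
    rw [hflt s hs.1.le hs.2, mul_zero]
  have hfc : f c = 0 := le_antisymm (hz ▸ hle c hcmem) (hf0 c hcmem)
  have hcS : c ∈ S := ⟨hcmem, fun t ht => (lt_or_eq_of_le ht.2).elim (hflt t ht.1) (fun h => h ▸ hfc)⟩
  have hafI : ∀ u v : ℝ, u ∈ Icc 0 x₀ → v ∈ Icc 0 x₀ →
      IntervalIntegrable (fun s => a s * f s) volume u v := fun u v hu hv =>
    (haf.mono_set (uIcc_subset_Icc hu hv)).intervalIntegrable
  have haII : ∀ u v : ℝ, u ∈ Icc 0 x₀ → v ∈ Icc 0 x₀ →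
      IntervalIntegrable a volume u v := fun u v hu hv =>
    (ha.mono_set (uIcc_subset_Icc hu hv)).intervalIntegrable
  have hcx : c = x₀ := by
    by_contra hne
    have hlt : c < x₀ := lt_of_le_of_ne hcmem.2 hne
    set F : ℝ → ℝ := fun x => ∫ s in c..x, a s with hF
    have hFcont : ContinuousOn F (Icc c x₀) := by
      have h1 : IntegrableOn a (uIcc c x₀) := by
        rw [uIcc_of_le hlt.le]; exact ha.mono_set (Icc_subset_Icc hcmem.1 le_rfl)
      have := intervalIntegral.continuousOn_primitive_interval (a := c) (b := x₀)
        (f := a) (μ := volume) h1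
      rwa [uIcc_of_le hlt.le] at this
    have hFc0 : F c = 0 := intervalIntegral.integral_same
    have hev : ∀ᶠ x in 𝓝[Icc c x₀] c, F x < 1/2 := by
      have hmem : Iio (1/2 : ℝ) ∈ 𝓝 (F c) := by
        rw [hFc0]; exact Iio_mem_nhds (by norm_num)
      exact (hFcont c (left_mem_Icc.2 hlt.le)) hmem
    have hev2 : ∀ᶠ x in 𝓝[>] c, F x < 1/2 ∧ x ∈ Ioc c x₀ := by
      have h1 : ∀ᶠ x in 𝓝[Ioc c x₀] c, F x < 1/2 :=
        hev.filter_mono (nhdsWithin_mono c Ioc_subset_Icc_self)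
      have h2 : ∀ᶠ x in 𝓝[Ioc c x₀] c, x ∈ Ioc c x₀ := self_mem_nhdsWithin
      rw [nhdsWithin_Ioc_eq_nhdsGT hlt] at h1 h2
      exact h1.and h2
    obtain ⟨b, hFb, hb⟩ := hev2.exists
    have hbmem : b ∈ Icc 0 x₀ := ⟨hcmem.1.trans hb.1.le, hb.2⟩
    have hsub : Icc c b ⊆ Icc 0 x₀ := Icc_subset_Icc hcmem.1 hb.2
    obtain ⟨ξ, hξ, hmax⟩ := isCompact_Icc.exists_isMaxOn (nonempty_Icc.2 hb.1.le)
      (hf.mono hsub)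
    set M := f ξ with hM
    have hξmem : ξ ∈ Icc 0 x₀ := hsub hξ
    have hM0 : 0 ≤ M := hf0 ξ hξmem
    -- bound f ξ
    have hsplit : (∫ s in (0:ℝ)..ξ, a s * f s) = ∫ s in c..ξ, a s * f s := by
      rw [← intervalIntegral.integral_add_adjacent_intervals
        (hafI 0 c h0mem hcmem) (hafI c ξ hcmem hξmem), hz, zero_add]
    have hmono : (∫ s in c..ξ, a s * f s) ≤ ∫ s in c..ξ, a s * M := by
      apply intervalIntegral.integral_mono_on hξ.1 (hafI c ξ hcmem hξmem)
        ((haII c ξ hcmem hξmem).mul_const M)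
      intro s hs
      have : f s ≤ M := hmax ⟨hs.1, hs.2.trans hξ.2⟩
      exact mul_le_mul_of_nonneg_left this (ha0 s ⟨hcmem.1.trans hs.1, hs.2.trans hξmem.2⟩)
    have hFξ : (∫ s in c..ξ, a s) ≤ F b := by
      have h2 : (∫ s in c..b, a s) = (∫ s in c..ξ, a s) + ∫ s in ξ..b, a s :=
        (intervalIntegral.integral_add_adjacent_intervals
          (haII c ξ hcmem hξmem) (haII ξ b hξmem hbmem)).symm
      have hpos : 0 ≤ ∫ s in ξ..b, a s := by
        apply intervalIntegral.integral_nonneg hξ.2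
        intro u hu
        exact ha0 u ⟨hξmem.1.trans hu.1, hu.2.trans hbmem.2⟩
      show (∫ s in c..ξ, a s) ≤ ∫ s in c..b, a s
      linarith
    have hMbound : M ≤ (1/2) * M := by
      calc M = f ξ := rfl
        _ ≤ ∫ s in (0:ℝ)..ξ, a s * f s := hle ξ hξmem
        _ = ∫ s in c..ξ, a s * f s := hsplit
        _ ≤ ∫ s in c..ξ, a s * M := hmono
        _ = (∫ s in c..ξ, a s) * M := by rw [intervalIntegral.integral_mul_const]
        _ ≤ (1/2) * M := by
            apply mul_le_mul_of_nonneg_right _ hM0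
            exact hFξ.trans hFb.le
    have hMz : M = 0 := by linarith
    have hbS : b ∈ S := by
      refine ⟨hbmem, ?_⟩
      intro t ht
      rcases le_or_gt t c with h | h
      · exact hcS.2 t ⟨ht.1, h⟩
      · have : f t ≤ M := hmax ⟨h.le, ht.2⟩
        exact le_antisymm (hMz ▸ this) (hf0 t ⟨ht.1, ht.2.trans hbmem.2⟩)
    exact absurd (le_csSup hbdd hbS) (not_le.2 hb.1)
  intro x hx
  exact hcS.2 x (by rwa [hcx])

lemma iint_apply (f : ℝ → Fin 2 → ℂ) (a b : ℝ)
    (h : ∀ i, IntervalIntegrable (fun t => f t i) volume a b) (i : Fin 2) :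
    (∫ t in a..b, f t) i = ∫ t in a..b, f t i := by
  have h1 : ∀ t, f t = f t 0 • (![1,0] : Fin 2 → ℂ) + f t 1 • (![0,1] : Fin 2 → ℂ) := by
    intro t; funext j; fin_cases j <;> simp
  rw [intervalIntegral.integral_congr (g := fun t => f t 0 • (![1,0] : Fin 2 → ℂ) + f t 1 • ![0,1]) (fun t _ => h1 t)]
  rw [intervalIntegral.integral_add ⟨(h 0).1.smul_const _, (h 0).2.smul_const _⟩ ⟨(h 1).1.smul_const _, (h 1).2.smul_const _⟩,
    intervalIntegral.integral_smul_const, intervalIntegral.integral_smul_const]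
  fin_cases i <;> simp

lemma Emat_mulVec (lam α : ℂ) (t : ℝ) :
    (EmatC lam t).mulVec ![Complex.sin α, -Complex.cos α] = phi0C lam α t := by
  funext i
  fin_cases i <;>
    simp [EmatC, BmatC, phi0C, Matrix.mulVec, dotProduct, Fin.sum_univ_two,
      Complex.sin_add, Complex.cos_add] <;> ring

lemma Emat_neg_mulVec (lam α : ℂ) (t : ℝ) :
    (EmatC lam (-t)).mulVec ![Complex.sin α, -Complex.cos α]
      = -(Complex.cos (2*α) • sigma2C + Complex.sin (2*α) • sigma3C).mulVec (phi0C lam α t) := by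
  funext i
  fin_cases i <;>
    simp [EmatC, BmatC, phi0C, sigma2C, sigma3C, Matrix.mulVec, dotProduct,
      Fin.sum_univ_two, Complex.sin_add, Complex.cos_add, Complex.ofReal_neg, mul_neg,
      Complex.cos_neg, Complex.sin_neg, Complex.sin_two_mul, Complex.cos_two_mul]
  · linear_combination (2 * Complex.sin (lam*t) * Complex.cos α) * (Complex.sin_sq_add_cos_sq α)
  · linear_combination (2 * Complex.cos (lam*t) * Complex.cos α) * (Complex.sin_sq_add_cos_sq α)

lemma mulVec_norm_bound (A : Matrix (Fin 2) (Fin 2) ℂ) (w : Fin 2 → ℂ) :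
    ‖(A.mulVec w) 0‖ + ‖(A.mulVec w) 1‖ ≤
      (‖A 0 0‖ + ‖A 0 1‖ + ‖A 1 0‖ + ‖A 1 1‖) * (‖w 0‖ + ‖w 1‖) := by
  simp only [Matrix.mulVec, dotProduct, Fin.sum_univ_two]
  have h0 := norm_add_le (A 0 0 * w 0) (A 0 1 * w 1)
  have h1 := norm_add_le (A 1 0 * w 0) (A 1 1 * w 1)
  simp only [norm_mul] at h0 h1
  nlinarith [norm_nonneg (A 0 0), norm_nonneg (A 0 1), norm_nonneg (A 1 0), norm_nonneg (A 1 1),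
    norm_nonneg (w 0), norm_nonneg (w 1)]

set_option maxHeartbeats 1000000 in
lemma uniqueness (p q : ℝ → ℂ)
    (hp : ∀ a : ℝ, 0 ≤ a → IntegrableOn p (Icc 0 a))
    (hq : ∀ a : ℝ, 0 ≤ a → IntegrableOn q (Icc 0 a))
    (lam : ℂ) (v : Fin 2 → ℂ) (y z : ℝ → Fin 2 → ℂ)
    (hyc : ∀ i, ContinuousOn (fun s => y s i) (Ici 0))
    (hzc : ∀ i, ContinuousOn (fun s => z s i) (Ici 0))
    (hy : ∀ x : ℝ, 0 ≤ x → ∀ i, y x i = v i + ∫ s in (0:ℝ)..x, ((AmatC p q lam s).mulVec (y s)) i)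
    (hz : ∀ x : ℝ, 0 ≤ x → ∀ i, z x i = v i + ∫ s in (0:ℝ)..x, ((AmatC p q lam s).mulVec (z s)) i) :
    ∀ x : ℝ, 0 ≤ x → y x = z x := by
  intro x₀ hx₀
  have huIcc : uIcc (0:ℝ) x₀ = Icc 0 x₀ := uIcc_of_le hx₀
  have hsubIci : uIcc (0:ℝ) x₀ ⊆ Ici 0 := by rw [huIcc]; exact Icc_subset_Ici_self
  have hpI : IntervalIntegrable p volume 0 x₀ := by
    rw [intervalIntegrable_iff_integrableOn_Icc_of_le hx₀]; exact hp x₀ hx₀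
  have hqI : IntervalIntegrable q volume 0 x₀ := by
    rw [intervalIntegrable_iff_integrableOn_Icc_of_le hx₀]; exact hq x₀ hx₀
  have hAint : ∀ i j, IntervalIntegrable (fun s => AmatC p q lam s i j) volume 0 x₀ := by
    intro i j
    fin_cases i <;> fin_cases j <;> simp only [AmatC, Matrix.cons_val', Matrix.cons_val_zero,
      Matrix.empty_val', Matrix.cons_val_fin_one, Matrix.cons_val_one, Matrix.head_cons,
      Matrix.head_fin_const]
    · exact hqI
    · exact hpI.neg.sub intervalIntegrable_const
    · exact intervalIntegrable_const.sub hpI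
    · exact hqI.neg
  have hmv : ∀ (w : ℝ → Fin 2 → ℂ), (∀ i, ContinuousOn (fun s => w s i) (Ici 0)) → ∀ i : Fin 2,
      IntervalIntegrable (fun s => ((AmatC p q lam s).mulVec (w s)) i) volume 0 x₀ := by
    intro w hw i
    have heq : (fun s => ((AmatC p q lam s).mulVec (w s)) i) =
        fun s => AmatC p q lam s i 0 * w s 0 + AmatC p q lam s i 1 * w s 1 := by
      funext s; simp [Matrix.mulVec, dotProduct, Fin.sum_univ_two]
    rw [heq]
    exact ((hAint i 0).mul_continuousOn ((hw 0).mono hsubIci)).add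
      ((hAint i 1).mul_continuousOn ((hw 1).mono hsubIci))
  set aco : ℝ → ℝ := fun s => ‖AmatC p q lam s 0 0‖ + ‖AmatC p q lam s 0 1‖ +
    ‖AmatC p q lam s 1 0‖ + ‖AmatC p q lam s 1 1‖ with haco
  have hacoInt : IntervalIntegrable aco volume 0 x₀ :=
    (((hAint 0 0).norm.add (hAint 0 1).norm).add (hAint 1 0).norm).add (hAint 1 1).norm
  have haco0 : ∀ s, 0 ≤ aco s := by
    intro s
    have := norm_nonneg (AmatC p q lam s 0 0)
    have := norm_nonneg (AmatC p q lam s 0 1)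
    have := norm_nonneg (AmatC p q lam s 1 0)
    have := norm_nonneg (AmatC p q lam s 1 1)
    positivity
  set f : ℝ → ℝ := fun s => ‖y s 0 - z s 0‖ + ‖y s 1 - z s 1‖ with hfdef
  have hfc : ContinuousOn f (Ici 0) :=
    (((hyc 0).sub (hzc 0)).norm).add (((hyc 1).sub (hzc 1)).norm)
  have hf0 : ∀ s, 0 ≤ f s := fun s => add_nonneg (norm_nonneg _) (norm_nonneg _)
  have hafInt : IntervalIntegrable (fun s => aco s * f s) volume 0 x₀ :=
    hacoInt.mul_continuousOn (hfc.mono hsubIci)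
  -- difference equation and bound
  have hDint : ∀ i : Fin 2, IntervalIntegrable
      (fun s => ((AmatC p q lam s).mulVec (y s)) i - ((AmatC p q lam s).mulVec (z s)) i)
      volume 0 x₀ := fun i => (hmv y hyc i).sub (hmv z hzc i)
  have hbound : ∀ e ∈ Icc 0 x₀, f e ≤ ∫ s in (0:ℝ)..e, aco s * f s := by
    intro e he
    have huIcc' : uIcc (0:ℝ) e ⊆ uIcc (0:ℝ) x₀ := by
      rw [huIcc, uIcc_of_le he.1]; exact Icc_subset_Icc le_rfl he.2
    have hDe : ∀ i : Fin 2, y e i - z e i =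
        ∫ s in (0:ℝ)..e, (((AmatC p q lam s).mulVec (y s)) i - ((AmatC p q lam s).mulVec (z s)) i) := by
      intro i
      rw [hy e he.1 i, hz e he.1 i,
        intervalIntegral.integral_sub ((hmv y hyc i).mono_set huIcc')
          ((hmv z hzc i).mono_set huIcc')]
      ring
    have hnorm : ∀ i : Fin 2, ‖y e i - z e i‖ ≤
        ∫ s in (0:ℝ)..e, ‖((AmatC p q lam s).mulVec (y s)) i - ((AmatC p q lam s).mulVec (z s)) i‖ := by
      intro i
      rw [hDe i]
      exact intervalIntegral.norm_integral_le_integral_norm he.1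
    have hptwise : ∀ s, ‖((AmatC p q lam s).mulVec (y s)) 0 - ((AmatC p q lam s).mulVec (z s)) 0‖ +
        ‖((AmatC p q lam s).mulVec (y s)) 1 - ((AmatC p q lam s).mulVec (z s)) 1‖ ≤ aco s * f s := by
      intro s
      have heq : ∀ i : Fin 2, ((AmatC p q lam s).mulVec (y s)) i - ((AmatC p q lam s).mulVec (z s)) i
          = ((AmatC p q lam s).mulVec (fun j => y s j - z s j)) i := by
        intro i
        simp [Matrix.mulVec, dotProduct, Fin.sum_univ_two]
        ring
      rw [heq 0, heq 1]
      exact mulVec_norm_bound (AmatC p q lam s) (fun j => y s j - z s j)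
    calc f e = ‖y e 0 - z e 0‖ + ‖y e 1 - z e 1‖ := rfl
      _ ≤ (∫ s in (0:ℝ)..e, ‖((AmatC p q lam s).mulVec (y s)) 0 - ((AmatC p q lam s).mulVec (z s)) 0‖)
          + ∫ s in (0:ℝ)..e, ‖((AmatC p q lam s).mulVec (y s)) 1 - ((AmatC p q lam s).mulVec (z s)) 1‖ :=
          add_le_add (hnorm 0) (hnorm 1)
      _ = ∫ s in (0:ℝ)..e, (‖((AmatC p q lam s).mulVec (y s)) 0 - ((AmatC p q lam s).mulVec (z s)) 0‖
          + ‖((AmatC p q lam s).mulVec (y s)) 1 - ((AmatC p q lam s).mulVec (z s)) 1‖) :=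
          (intervalIntegral.integral_add ((hDint 0).norm.mono_set huIcc')
            ((hDint 1).norm.mono_set huIcc')).symm
      _ ≤ ∫ s in (0:ℝ)..e, aco s * f s := by
          apply intervalIntegral.integral_mono_on he.1
            (((hDint 0).norm.mono_set huIcc').add ((hDint 1).norm.mono_set huIcc'))
            (hafInt.mono_set huIcc')
          exact fun s _ => hptwise s
  have hgron := gronwall_zero f aco x₀ hx₀ (hfc.mono Icc_subset_Ici_self) (fun s _ => hf0 s)
    (fun s _ => haco0 s)
    ((intervalIntegrable_iff_integrableOn_Icc_of_le hx₀).1 hacoInt)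
    ((intervalIntegrable_iff_integrableOn_Icc_of_le hx₀).1 hafInt)
    hbound
  have hfx := hgron x₀ ⟨hx₀, le_rfl⟩
  have hfx' : ‖y x₀ 0 - z x₀ 0‖ + ‖y x₀ 1 - z x₀ 1‖ = 0 := hfx
  have h0 : ‖y x₀ 0 - z x₀ 0‖ = 0 ∧ ‖y x₀ 1 - z x₀ 1‖ = 0 := by
    constructor <;>
      nlinarith [hfx', norm_nonneg (y x₀ 0 - z x₀ 0), norm_nonneg (y x₀ 1 - z x₀ 1)]
  funext i
  fin_cases i
  · exact sub_eq_zero.1 (norm_eq_zero.1 h0.1)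
  · exact sub_eq_zero.1 (norm_eq_zero.1 h0.2)

/-- If `K(x, t)` is a kernel realizing the transformation-operator
representation of the fundamental matrix `Φ(x, λ)`, then the solution `φ(x, λ, α)`
of the Cauchy problem with data `(sin α, -cos α)` is represented as
`φ(x,λ,α) = φ₀(x,λ,α) + ∫₀ˣ K₀(x,t,α) φ₀(t,λ,α) dt`. -/
theorem stmt_2 (p q : ℝ → ℂ)
    (hp : ∀ a : ℝ, 0 ≤ a → IntegrableOn p (Icc 0 a))
    (hq : ∀ a : ℝ, 0 ≤ a → IntegrableOn q (Icc 0 a))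
    (φ : ℂ → ℂ → ℝ → (Fin 2 → ℂ))
    (hφc : ∀ lam α : ℂ, ContinuousOn (φ lam α) (Ici 0))
    (hφ : ∀ lam α : ℂ, ∀ x : ℝ, 0 ≤ x →
      φ lam α x = ![Complex.sin α, -Complex.cos α] +
        ∫ s in (0:ℝ)..x, (AmatC p q lam s).mulVec (φ lam α s))
    (Φ : ℂ → ℝ → Matrix (Fin 2) (Fin 2) ℂ)
    (hΦc : ∀ lam : ℂ, ∀ i j : Fin 2, ContinuousOn (fun x => Φ lam x i j) (Ici 0))
    (hΦ : ∀ lam : ℂ, ∀ x : ℝ, 0 ≤ x → ∀ i j : Fin 2,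
      Φ lam x i j = (1 : Matrix (Fin 2) (Fin 2) ℂ) i j +
        ∫ s in (0:ℝ)..x, (AmatC p q lam s * Φ lam s) i j)
    (K : ℝ → ℝ → Matrix (Fin 2) (Fin 2) ℂ)
    (hKmeas : ∀ i j : Fin 2, Measurable fun z : ℝ × ℝ => K z.1 z.2 i j)
    (hKint : ∀ x : ℝ, 0 ≤ x → ∀ i j : Fin 2,
      IntervalIntegrable (fun t => K x t i j) volume (-x) x)
    (hKrep : ∀ lam : ℂ, ∀ x : ℝ, 0 ≤ x → ∀ i j : Fin 2,
      Φ lam x i j = EmatC lam x i j + ∫ t in (-x)..x, (K x t * EmatC lam t) i j) :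
    ∀ lam α : ℂ, ∀ x : ℝ, 0 ≤ x →
      φ lam α x = phi0C lam α x +
        ∫ t in (0:ℝ)..x, (K0ker K α x t).mulVec (phi0C lam α t) := by
  intro lam α x hx
  set v : Fin 2 → ℂ := ![Complex.sin α, -Complex.cos α] with hv
  set ψ : ℝ → Fin 2 → ℂ := fun s => (Φ lam s).mulVec v with hψ
  -- component continuity
  have hφcc : ∀ i, ContinuousOn (fun s => φ lam α s i) (Ici 0) :=
    fun i => (continuous_apply i).comp_continuousOn (hφc lam α)
  have hψc : ∀ i, ContinuousOn (fun s => ψ s i) (Ici 0) := by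
    intro i
    have h : (fun s => ψ s i) = fun s => Φ lam s i 0 * v 0 + Φ lam s i 1 * v 1 := by
      funext s; simp [hψ, Matrix.mulVec, dotProduct, Fin.sum_univ_two]
      fin_cases i <;> rfl
    rw [h]
    exact ((hΦc lam i 0).mul continuousOn_const).add ((hΦc lam i 1).mul continuousOn_const)
  -- interval integrability of A entries on any [0, e]
  have hAint : ∀ e : ℝ, 0 ≤ e → ∀ i j, IntervalIntegrable (fun s => AmatC p q lam s i j) volume 0 e := by
    intro e he i j
    have hpI : IntervalIntegrable p volume 0 e := by
      rw [intervalIntegrable_iff_integrableOn_Icc_of_le he]; exact hp e he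
    have hqI : IntervalIntegrable q volume 0 e := by
      rw [intervalIntegrable_iff_integrableOn_Icc_of_le he]; exact hq e he
    fin_cases i <;> fin_cases j <;> simp only [AmatC, Matrix.cons_val', Matrix.cons_val_zero,
      Matrix.empty_val', Matrix.cons_val_fin_one, Matrix.cons_val_one, Matrix.head_cons,
      Matrix.head_fin_const]
    · exact hqI
    · exact hpI.neg.sub intervalIntegrable_const
    · exact intervalIntegrable_const.sub hpI
    · exact hqI.neg
  have hAmv : ∀ (w : ℝ → Fin 2 → ℂ), (∀ i, ContinuousOn (fun s => w s i) (Ici 0)) →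
      ∀ e : ℝ, 0 ≤ e → ∀ i : Fin 2,
      IntervalIntegrable (fun s => ((AmatC p q lam s).mulVec (w s)) i) volume 0 e := by
    intro w hw e he i
    have hsub : uIcc (0:ℝ) e ⊆ Ici 0 := by rw [uIcc_of_le he]; exact Icc_subset_Ici_self
    have heq : (fun s => ((AmatC p q lam s).mulVec (w s)) i) =
        fun s => AmatC p q lam s i 0 * w s 0 + AmatC p q lam s i 1 * w s 1 := by
      funext s; simp [Matrix.mulVec, dotProduct, Fin.sum_univ_two]
    rw [heq]
    exact ((hAint e he i 0).mul_continuousOn ((hw 0).mono hsub)).add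
      ((hAint e he i 1).mul_continuousOn ((hw 1).mono hsub))
  -- componentwise equations
  have hφcomp : ∀ e : ℝ, 0 ≤ e → ∀ i, φ lam α e i =
      v i + ∫ s in (0:ℝ)..e, ((AmatC p q lam s).mulVec (φ lam α s)) i := by
    intro e he i
    have h := congrFun (hφ lam α e he) i
    rw [h]
    simp only [Pi.add_apply]
    congr 1
    exact iint_apply _ 0 e (fun j => hAmv (φ lam α) hφcc e he j) i
  have hψcomp : ∀ e : ℝ, 0 ≤ e → ∀ i, ψ e i =
      v i + ∫ s in (0:ℝ)..e, ((AmatC p q lam s).mulVec (ψ s)) i := by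
    intro e he i
    have hsub : uIcc (0:ℝ) e ⊆ Ici 0 := by rw [uIcc_of_le he]; exact Icc_subset_Ici_self
    have hAΦ : ∀ j k, IntervalIntegrable (fun s => (AmatC p q lam s * Φ lam s) j k) volume 0 e := by
      intro j k
      have heq : (fun s => (AmatC p q lam s * Φ lam s) j k) =
          fun s => AmatC p q lam s j 0 * Φ lam s 0 k + AmatC p q lam s j 1 * Φ lam s 1 k := by
        funext s; simp [Matrix.mul_apply, Fin.sum_univ_two]
      rw [heq]
      exact ((hAint e he j 0).mul_continuousOn ((hΦc lam 0 k).mono hsub)).add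
        ((hAint e he j 1).mul_continuousOn ((hΦc lam 1 k).mono hsub))
    have hstart : ψ e i = Φ lam e i 0 * v 0 + Φ lam e i 1 * v 1 := by
      simp [hψ, Matrix.mulVec, dotProduct, Fin.sum_univ_two]
      fin_cases i <;> rfl
    rw [hstart, hΦ lam e he i 0, hΦ lam e he i 1]
    have hint : (fun s => ((AmatC p q lam s).mulVec (ψ s)) i) =
        fun s => (AmatC p q lam s * Φ lam s) i 0 * v 0 + (AmatC p q lam s * Φ lam s) i 1 * v 1 := by
      funext s
      simp [hψ, Matrix.mulVec, dotProduct, Matrix.mul_apply, Fin.sum_univ_two]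
      ring
    rw [hint, intervalIntegral.integral_add ((hAΦ i 0).mul_const (v 0)) ((hAΦ i 1).mul_const (v 1)),
      intervalIntegral.integral_mul_const, intervalIntegral.integral_mul_const]
    fin_cases i <;> simp [Matrix.one_apply, hv] <;> ring
  -- uniqueness : φ = ψ
  have key : φ lam α x = ψ x :=
    uniqueness p q hp hq lam v (φ lam α) ψ hφcc hψc hφcomp hψcomp x hx
  set Mα : Matrix (Fin 2) (Fin 2) ℂ :=
    Complex.cos (2*α) • sigma2C + Complex.sin (2*α) • sigma3C with hMα
  have hcos : Continuous fun t : ℝ => Complex.cos (lam * t) :=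
    Complex.continuous_cos.comp (continuous_const.mul Complex.continuous_ofReal)
  have hsin : Continuous fun t : ℝ => Complex.sin (lam * t) :=
    Complex.continuous_sin.comp (continuous_const.mul Complex.continuous_ofReal)
  have hE : ∀ i j, Continuous (fun t : ℝ => EmatC lam t i j) := by
    intro i j
    fin_cases i <;> fin_cases j <;>
      simp [EmatC, BmatC, Matrix.one_apply, Matrix.sub_apply, Matrix.smul_apply]
    · exact hcos
    · exact hsin.neg
    · exact hsin
    · exact hcos
  have hφ0cont : ∀ i, Continuous (fun t : ℝ => phi0C lam α t i) := by
    intro i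
    have hs : Continuous fun t : ℝ => Complex.sin (lam * t + α) :=
      Complex.continuous_sin.comp ((continuous_const.mul Complex.continuous_ofReal).add
        continuous_const)
    have hc : Continuous fun t : ℝ => Complex.cos (lam * t + α) :=
      Complex.continuous_cos.comp ((continuous_const.mul Complex.continuous_ofReal).add
        continuous_const)
    fin_cases i <;> simp [phi0C]
    · exact hs
    · exact hc.neg
  have hsub0x : uIcc (0:ℝ) x ⊆ uIcc (-x) x := by
    rw [uIcc_of_le hx, uIcc_of_le ((neg_nonpos.2 hx).trans hx)]
    exact Icc_subset_Icc (neg_nonpos.2 hx) le_rfl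
  have hsubn : uIcc (-x) (0:ℝ) ⊆ uIcc (-x) x := by
    rw [uIcc_of_le (neg_nonpos.2 hx), uIcc_of_le ((neg_nonpos.2 hx).trans hx)]
    exact Icc_subset_Icc le_rfl hx
  have hK0x : ∀ i j, IntervalIntegrable (fun t => K x t i j) volume 0 x :=
    fun i j => (hKint x hx i j).mono_set hsub0x
  have hKneg : ∀ i j, IntervalIntegrable (fun t => K x (-t) i j) volume 0 x := by
    intro i j
    have h1 : IntervalIntegrable (fun t => K x t i j) volume (-x) 0 :=
      (hKint x hx i j).mono_set hsubn
    have h2 := (IntervalIntegrable.iff_comp_neg (by simp)).mp h1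
    simpa using h2.symm
  have hKE : ∀ i j, IntervalIntegrable (fun t => (K x t * EmatC lam t) i j) volume (-x) x := by
    intro i j
    have heq : (fun t => (K x t * EmatC lam t) i j) =
        fun t => K x t i 0 * EmatC lam t 0 j + K x t i 1 * EmatC lam t 1 j := by
      funext t; simp [Matrix.mul_apply, Fin.sum_univ_two]
    rw [heq]
    exact ((hKint x hx i 0).mul_continuousOn (hE 0 j).continuousOn).add
      ((hKint x hx i 1).mul_continuousOn (hE 1 j).continuousOn)
  have hGint : ∀ i, IntervalIntegrable (fun t => ((K x t * EmatC lam t).mulVec v) i) volume (-x) x := by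
    intro i
    have heq : (fun t => ((K x t * EmatC lam t).mulVec v) i) =
        fun t => (K x t * EmatC lam t) i 0 * v 0 + (K x t * EmatC lam t) i 1 * v 1 := by
      funext t; simp [Matrix.mulVec, dotProduct, Fin.sum_univ_two]
    rw [heq]
    exact ((hKE i 0).mul_const _).add ((hKE i 1).mul_const _)
  have hKMint : ∀ i j, IntervalIntegrable (fun t => (K x (-t) * Mα) i j) volume 0 x := by
    intro i j
    have heq : (fun t => (K x (-t) * Mα) i j) =
        fun t => K x (-t) i 0 * Mα 0 j + K x (-t) i 1 * Mα 1 j := by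
      funext t; simp [Matrix.mul_apply, Fin.sum_univ_two]
    rw [heq]
    exact ((hKneg i 0).mul_const _).add ((hKneg i 1).mul_const _)
  have hKφ0 : ∀ i, IntervalIntegrable (fun t => ((K x t).mulVec (phi0C lam α t)) i) volume 0 x := by
    intro i
    have heq : (fun t => ((K x t).mulVec (phi0C lam α t)) i) =
        fun t => K x t i 0 * phi0C lam α t 0 + K x t i 1 * phi0C lam α t 1 := by
      funext t; simp [Matrix.mulVec, dotProduct, Fin.sum_univ_two]
    rw [heq]
    exact ((hK0x i 0).mul_continuousOn (hφ0cont 0).continuousOn).add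
      ((hK0x i 1).mul_continuousOn (hφ0cont 1).continuousOn)
  have hKMφ0 : ∀ i, IntervalIntegrable (fun t => ((K x (-t) * Mα).mulVec (phi0C lam α t)) i) volume 0 x := by
    intro i
    have heq : (fun t => ((K x (-t) * Mα).mulVec (phi0C lam α t)) i) =
        fun t => (K x (-t) * Mα) i 0 * phi0C lam α t 0 + (K x (-t) * Mα) i 1 * phi0C lam α t 1 := by
      funext t; simp [Matrix.mulVec, dotProduct, Fin.sum_univ_two]
    rw [heq]
    exact ((hKMint i 0).mul_continuousOn (hφ0cont 0).continuousOn).add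
      ((hKMint i 1).mul_continuousOn (hφ0cont 1).continuousOn)
  have hfinal : ∀ i, IntervalIntegrable (fun t => ((K0ker K α x t).mulVec (phi0C lam α t)) i) volume 0 x := by
    intro i
    have heq : (fun t => ((K0ker K α x t).mulVec (phi0C lam α t)) i) =
        fun t => ((K x t).mulVec (phi0C lam α t)) i - ((K x (-t) * Mα).mulVec (phi0C lam α t)) i := by
      funext t
      rw [show K0ker K α x t = K x t - K x (-t) * Mα from by rw [hMα]; rfl,
        Matrix.sub_mulVec]
      simp
    rw [heq]
    exact (hKφ0 i).sub (hKMφ0 i)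
  rw [key]
  funext i
  -- LHS expansion
  have hstart : ψ x i = Φ lam x i 0 * v 0 + Φ lam x i 1 * v 1 := by
    simp [hψ, Matrix.mulVec, dotProduct, Fin.sum_univ_two]
    fin_cases i <;> rfl
  have hψx : ψ x i = phi0C lam α x i + ∫ t in (-x)..x, ((K x t * EmatC lam t).mulVec v) i := by
    rw [hstart, hKrep lam x hx i 0, hKrep lam x hx i 1]
    have hiv : (fun t => ((K x t * EmatC lam t).mulVec v) i) =
        fun t => (K x t * EmatC lam t) i 0 * v 0 + (K x t * EmatC lam t) i 1 * v 1 := by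
      funext t; simp [Matrix.mulVec, dotProduct, Fin.sum_univ_two]
    rw [hiv, intervalIntegral.integral_add ((hKE i 0).mul_const _) ((hKE i 1).mul_const _),
      intervalIntegral.integral_mul_const, intervalIntegral.integral_mul_const]
    have hE0 : EmatC lam x i 0 * v 0 + EmatC lam x i 1 * v 1 = phi0C lam α x i := by
      have h := congrFun (Emat_mulVec lam α x) i
      rw [← h]
      simp [Matrix.mulVec, dotProduct, Fin.sum_univ_two, hv]
    linear_combination hE0
  have hsplit : (∫ t in (-x)..x, ((K x t * EmatC lam t).mulVec v) i)
      = (∫ t in (-x)..(0:ℝ), ((K x t * EmatC lam t).mulVec v) i)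
        + ∫ t in (0:ℝ)..x, ((K x t * EmatC lam t).mulVec v) i :=
    (intervalIntegral.integral_add_adjacent_intervals ((hGint i).mono_set hsubn)
      ((hGint i).mono_set hsub0x)).symm
  have hptneg : ∀ t : ℝ, ((K x (-t) * EmatC lam (-t)).mulVec v) i
      = -(((K x (-t) * Mα).mulVec (phi0C lam α t)) i) := by
    intro t
    rw [← Matrix.mulVec_mulVec, Emat_neg_mulVec lam α t, ← hMα, Matrix.mulVec_neg,
      Matrix.mulVec_mulVec]
    simp
  have hneg : (∫ t in (-x)..(0:ℝ), ((K x t * EmatC lam t).mulVec v) i)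
      = -∫ t in (0:ℝ)..x, ((K x (-t) * Mα).mulVec (phi0C lam α t)) i := by
    have h1 := intervalIntegral.integral_comp_neg (a := (0:ℝ)) (b := x)
      (f := fun t => ((K x t * EmatC lam t).mulVec v) i)
    simp only [neg_zero] at h1
    rw [← h1]
    rw [intervalIntegral.integral_congr (g := fun t => -(((K x (-t) * Mα).mulVec (phi0C lam α t)) i))
      (fun t _ => hptneg t)]
    rw [intervalIntegral.integral_neg]
  have hpos : (∫ t in (0:ℝ)..x, ((K x t * EmatC lam t).mulVec v) i)
      = ∫ t in (0:ℝ)..x, ((K x t).mulVec (phi0C lam α t)) i := by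
    apply intervalIntegral.integral_congr
    intro t _
    show ((K x t * EmatC lam t).mulVec v) i = ((K x t).mulVec (phi0C lam α t)) i
    rw [← Matrix.mulVec_mulVec, hv, Emat_mulVec]
  have hRHS : (phi0C lam α x + ∫ t in (0:ℝ)..x, (K0ker K α x t).mulVec (phi0C lam α t)) i
      = phi0C lam α x i + ((∫ t in (0:ℝ)..x, ((K x t).mulVec (phi0C lam α t)) i)
        - ∫ t in (0:ℝ)..x, ((K x (-t) * Mα).mulVec (phi0C lam α t)) i) := by
    simp only [Pi.add_apply]
    rw [iint_apply _ 0 x hfinal i]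
    rw [intervalIntegral.integral_congr
      (g := fun t => ((K x t).mulVec (phi0C lam α t)) i - ((K x (-t) * Mα).mulVec (phi0C lam α t)) i)
      (fun t _ => by
        rw [show K0ker K α x t = K x t - K x (-t) * Mα from by rw [hMα]; rfl,
          Matrix.sub_mulVec]
        simp)]
    rw [intervalIntegral.integral_sub (hKφ0 i) (hKMφ0 i)]
  rw [hRHS, hψx, hsplit, hneg, hpos]
  ring
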